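/- arXiv:2405.04672 — 4 statements merged into one kernel-verified Lean document; each statement's English description precedes it below -/
import Mathlib

section
/- Let ρ be a PSD n×n complex matrix and let N₁, …, N_m (m ≥ 1) be pairwise commuting PSD n×n complex matrices. Then tr(ρ·N₁N₂⋯N_m) is a nonnegative real number and tr(ρ·N₁N₂⋯N_m) ≤ ∏_{k=1}^m ( tr(ρ·N_k^m) )^(1/m), where the m-th roots are real powers of the nonnegative real traces. -/
open scoped Matrix ComplexOrder

open MeasureTheory Finset in
private lemma holder_fin' {d m : ℕ} (hm : 1 ≤ m) (p : Fin d → ℝ) (hp : ∀ i, 0 ≤ p i)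
    (a : Fin d → Fin m → ℝ) (ha : ∀ i k, 0 ≤ a i k) :
    ∑ i, (∏ k, a i k) * p i ≤ ∏ k : Fin m, (∑ i, a i k ^ m * p i) ^ ((1 : ℝ)/(m : ℝ)) := by
  have hm0 : (m : ℝ) ≠ 0 := by positivity
  have hinv : 0 ≤ (1:ℝ)/(m:ℝ) := by positivity
  set F : Fin m → Fin d → ENNReal := fun k i => ENNReal.ofReal (a i k ^ m * p i) with hF
  have key := ENNReal.lintegral_prod_norm_pow_le (μ := Measure.count) (Finset.univ : Finset (Fin m))
    (f := F) (fun k _ => ((measurable_of_countable _).aemeasurable))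
    (p := fun _ => (1:ℝ)/(m:ℝ))
    (by rw [Finset.sum_const, Finset.card_univ, Fintype.card_fin, nsmul_eq_mul]; field_simp) (fun k _ => hinv)
  simp only [lintegral_count, tsum_fintype] at key
  have hL : ∀ i : Fin d, ∏ k : Fin m, F k i ^ ((1:ℝ)/(m:ℝ))
      = ENNReal.ofReal ((∏ k, a i k) * p i) := by
    intro i
    have h1 : ∀ k : Fin m, F k i ^ ((1:ℝ)/(m:ℝ))
        = ENNReal.ofReal (a i k * p i ^ ((1:ℝ)/(m:ℝ))) := by
      intro k
      rw [hF]
      rw [ENNReal.ofReal_rpow_of_nonneg (mul_nonneg (pow_nonneg (ha i k) m) (hp i)) hinv]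
      congr 1
      rw [Real.mul_rpow (pow_nonneg (ha i k) m) (hp i), ← Real.rpow_natCast (a i k) m,
        ← Real.rpow_mul (ha i k)]
      rw [mul_one_div, div_self hm0, Real.rpow_one]
    simp_rw [h1]
    rw [← ENNReal.ofReal_prod_of_nonneg
      (fun k _ => mul_nonneg (ha i k) (Real.rpow_nonneg (hp i) _))]
    congr 1
    rw [Finset.prod_mul_distrib, Finset.prod_const, Finset.card_univ, Fintype.card_fin,
      ← Real.rpow_natCast (p i ^ ((1:ℝ)/(m:ℝ))) m, ← Real.rpow_mul (hp i),
      one_div_mul_cancel hm0, Real.rpow_one]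
  have hR : ∀ k : Fin m, (∑ i, F k i) ^ ((1:ℝ)/(m:ℝ))
      = ENNReal.ofReal ((∑ i, a i k ^ m * p i) ^ ((1:ℝ)/(m:ℝ))) := by
    intro k
    rw [hF, ← ENNReal.ofReal_sum_of_nonneg
        (fun i _ => mul_nonneg (pow_nonneg (ha i k) m) (hp i)),
      ENNReal.ofReal_rpow_of_nonneg
        (Finset.sum_nonneg fun i _ => mul_nonneg (pow_nonneg (ha i k) m) (hp i)) hinv]
  have key2 : ∑ i : Fin d, ENNReal.ofReal ((∏ k, a i k) * p i)
      ≤ ∏ k : Fin m, ENNReal.ofReal ((∑ i, a i k ^ m * p i) ^ ((1:ℝ)/(m:ℝ))) := by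
    calc ∑ i : Fin d, ENNReal.ofReal ((∏ k, a i k) * p i)
        = ∑ i : Fin d, ∏ k : Fin m, F k i ^ ((1:ℝ)/(m:ℝ)) := by
          exact Finset.sum_congr rfl fun i _ => (hL i).symm
      _ ≤ ∏ k : Fin m, (∑ i, F k i) ^ ((1:ℝ)/(m:ℝ)) := key
      _ = _ := Finset.prod_congr rfl fun k _ => hR k
  replace key := key2
  rw [← ENNReal.ofReal_sum_of_nonneg
      (fun i _ => mul_nonneg (Finset.prod_nonneg fun k _ => ha i k) (hp i)),
    ← ENNReal.ofReal_prod_of_nonneg (fun k _ => Real.rpow_nonneg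
      (Finset.sum_nonneg fun i _ => mul_nonneg (pow_nonneg (ha i k) m) (hp i)) _)] at key
  exact (ENNReal.ofReal_le_ofReal_iff (Finset.prod_nonneg fun k _ => Real.rpow_nonneg
      (Finset.sum_nonneg fun i _ => mul_nonneg (pow_nonneg (ha i k) m) (hp i)) _)).mp key

open Matrix in
private lemma list_prod_mulVec' {n : ℕ} {ι : Type*} (A : ι → Matrix (Fin n) (Fin n) ℂ)
    (g : ι → ℂ) (x : Fin n → ℂ) (h : ∀ k, A k *ᵥ x = g k • x) :
    ∀ L : List ι, ((L.map A).prod) *ᵥ x = ((L.map g).prod) • x := by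
  intro L
  induction L with
  | nil => simp
  | cons a L ih =>
    simp only [List.map_cons, List.prod_cons]
    rw [← Matrix.mulVec_mulVec, ih, Matrix.mulVec_smul, h a, smul_smul, mul_comm]

open Matrix in
private lemma trace_conj_unitary' {n : ℕ} (A U : Matrix (Fin n) (Fin n) ℂ)
    (h1 : U * Uᴴ = 1) : (Uᴴ * A * U).trace = A.trace := by
  rw [Matrix.trace_mul_comm, ← Matrix.mul_assoc, h1, Matrix.one_mul]

open Matrix in
private lemma conj_diag_eq' {n : ℕ} (A U : Matrix (Fin n) (Fin n) ℂ) (j : Fin n) :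
    (Uᴴ * A * U) j j = star (fun i => U i j) ⬝ᵥ (A *ᵥ fun i => U i j) := by
  simp only [Matrix.mul_apply, Matrix.conjTranspose_apply, dotProduct,
    Matrix.mulVec, Pi.star_apply, Finset.sum_mul, Finset.mul_sum]
  rw [Finset.sum_comm]
  exact Finset.sum_congr rfl fun i _ => Finset.sum_congr rfl fun l _ => by ring

set_option maxHeartbeats 1000000 in
/-- Trace Hölder inequality for commuting PSD matrices:
`tr(ρ·N₁⋯N_m)` is a nonnegative real and is at most
`∏_k tr(ρ·N_k^m)^(1/m)`. -/
theorem stmt_5 {n m : ℕ} (hn : 1 ≤ n) (hm : 1 ≤ m)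
    (ρ : Matrix (Fin n) (Fin n) ℂ) (hρ : ρ.PosSemidef)
    (N : Fin m → Matrix (Fin n) (Fin n) ℂ)
    (hN : ∀ k, (N k).PosSemidef)
    (hcomm : ∀ j k, N j * N k = N k * N j) :
    0 ≤ (ρ * (List.ofFn N).prod).trace.re ∧
    (ρ * (List.ofFn N).prod).trace.im = 0 ∧
    (ρ * (List.ofFn N).prod).trace.re
      ≤ ∏ k : Fin m, ((ρ * (N k) ^ m).trace.re) ^ ((1 : ℝ) / (m : ℝ)) := by
  classical
  open Matrix Module.End in
  set T : Fin m → Module.End ℂ (EuclideanSpace ℂ (Fin n)) :=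
    fun k => Matrix.toEuclideanLin (N k) with hT'
  have hT : ∀ k, (T k).IsSymmetric := fun k => Matrix.isHermitian_iff_isSymmetric.mp (hN k).1
  have hmul : ∀ a b : Matrix (Fin n) (Fin n) ℂ,
      Matrix.toEuclideanLin (a * b) = Matrix.toEuclideanLin a ∘ₗ Matrix.toEuclideanLin b := by
    intro a b
    ext x
    simp [Matrix.toEuclideanLin_apply, Matrix.mulVec_mulVec]
  have hTc : Pairwise (Function.onFun Commute T) := by
    intro j k _
    show T j * T k = T k * T j
    have : ∀ a b : Matrix (Fin n) (Fin n) ℂ,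
        Matrix.toEuclideanLin a * Matrix.toEuclideanLin b = Matrix.toEuclideanLin (a * b) := by
      intro a b; exact (hmul a b).symm
    rw [hT', this, this, hcomm j k]
  have internal0 := LinearMap.IsSymmetric.LinearMap.IsSymmetric.directSum_isInternal_of_pairwise_commute hT hTc
  have internal : DirectSum.IsInternal
      (fun i : {γ : Fin m → ℂ // (⨅ j, Module.End.eigenspace (T j) (γ j)) ≠ ⊥} =>
        ⨅ j, Module.End.eigenspace (T j) (i.val j)) :=
    DirectSum.isInternal_ne_bot_iff.mpr internal0
  have : Fintype {γ : Fin m → ℂ // (⨅ j, Module.End.eigenspace (T j) (γ j)) ≠ ⊥} :=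
    internal0.submodule_iSupIndep.fintypeNeBotOfFiniteDimensional
  have hOF0 := LinearMap.IsSymmetric.orthogonalFamily_iInf_eigenspaces hT
  have hOF := hOF0.comp
    (f := (Subtype.val :
      {γ : Fin m → ℂ // (⨅ j, Module.End.eigenspace (T j) (γ j)) ≠ ⊥} → (Fin m → ℂ)))
    Subtype.val_injective
  have hn' : Module.finrank ℂ (EuclideanSpace ℂ (Fin n)) = n := by
    simp [finrank_euclideanSpace]
  set b := internal.subordinateOrthonormalBasis hn' hOF with hb
  set χ : Fin n → Fin m → ℂ :=
    fun i => (internal.subordinateOrthonormalBasisIndex hn' i hOF).val with hχdef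
  have hsub : ∀ i, b i ∈ ⨅ j, Module.End.eigenspace (T j) (χ i j) := by
    intro i
    simp only [hb, hχdef]
    exact internal.subordinateOrthonormalBasis_subordinate hn' i hOF
  set c : Fin n → Fin n → ℂ := fun i => WithLp.equiv 2 (Fin n → ℂ) (b i) with hc
  have heig : ∀ i k, N k *ᵥ c i = χ i k • c i := by
    intro i k
    have h1 : T k (b i) = χ i k • b i :=
      Module.End.mem_eigenspace_iff.mp ((Submodule.mem_iInf _).mp (hsub i) k)
    have h2 := congrArg (WithLp.equiv 2 (Fin n → ℂ)) h1
    rw [hT'] at h2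
    rw [Matrix.toEuclideanLin_apply] at h2
    exact h2
  have hortho : ∀ i j, star (c i) ⬝ᵥ c j = if i = j then 1 else 0 := by
    intro i j
    have := orthonormal_iff_ite.mp b.orthonormal i j
    rw [← this]
    simp only [PiLp.inner_apply, RCLike.inner_apply, dotProduct, Pi.star_apply]
    exact Finset.sum_congr rfl fun x _ => mul_comm _ _
  set U : Matrix (Fin n) (Fin n) ℂ := Matrix.of (fun i j => c j i) with hUdef
  have hcU : ∀ j, (fun i => U i j) = c j := fun j => rfl
  have hU1 : Uᴴ * U = 1 := by
    ext i j
    simp only [Matrix.mul_apply, Matrix.conjTranspose_apply, Matrix.one_apply, hUdef,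
      Matrix.of_apply]
    have := hortho i j
    simpa [dotProduct] using this
  have hU2 : U * Uᴴ = 1 := mul_eq_one_comm.mpr hU1
  have htr : ∀ X : Matrix (Fin n) (Fin n) ℂ,
      (ρ * X).trace = ∑ i, star (c i) ⬝ᵥ (ρ *ᵥ (X *ᵥ c i)) := by
    intro X
    rw [← trace_conj_unitary' (ρ * X) U hU2]
    rw [Matrix.trace]
    refine Finset.sum_congr rfl fun i _ => ?_
    rw [Matrix.diag_apply, conj_diag_eq' (ρ * X) U i, hcU i, ← Matrix.mulVec_mulVec]
  set q : Fin n → ℂ := fun i => star (c i) ⬝ᵥ (ρ *ᵥ c i) with hqdef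
  have hq : ∀ i, 0 ≤ q i := fun i => hρ.dotProduct_mulVec_nonneg (c i)
  have hχpos : ∀ i k, 0 ≤ χ i k := by
    intro i k
    have h1 := (hN k).dotProduct_mulVec_nonneg (c i)
    rw [heig i k, dotProduct_smul, smul_eq_mul, hortho i i] at h1
    simpa using h1
  -- eigen-equation for the full product
  have hP : ∀ i, ((List.ofFn N).prod) *ᵥ c i = (∏ k, χ i k) • c i := by
    intro i
    have := list_prod_mulVec' N (χ i) (c i) (fun k => heig i k) (List.finRange m)
    rw [← List.ofFn_eq_map, ← List.ofFn_eq_map, List.prod_ofFn] at this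
    exact this
  have hPow : ∀ i k, (N k ^ m) *ᵥ c i = (χ i k ^ m) • c i := by
    intro i k
    have := list_prod_mulVec' N (χ i) (c i) (fun k => heig i k) (List.replicate m k)
    rwa [List.map_replicate, List.map_replicate, List.prod_replicate, List.prod_replicate]
      at this
  -- trace formulas
  have htr1 : (ρ * (List.ofFn N).prod).trace = ∑ i, (∏ k, χ i k) * q i := by
    rw [htr]
    refine Finset.sum_congr rfl fun i _ => ?_
    rw [hP i, Matrix.mulVec_smul, dotProduct_smul, smul_eq_mul]
  have htr2 : ∀ k, (ρ * N k ^ m).trace = ∑ i, (χ i k ^ m) * q i := by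
    intro k
    rw [htr]
    refine Finset.sum_congr rfl fun i _ => ?_
    rw [hPow i k, Matrix.mulVec_smul, dotProduct_smul, smul_eq_mul]
  -- realification
  set a : Fin n → Fin m → ℝ := fun i k => (χ i k).re with hadef
  set p : Fin n → ℝ := fun i => (q i).re with hpdef
  have ha : ∀ i k, 0 ≤ a i k := fun i k => (Complex.nonneg_iff.mp (hχpos i k)).1
  have hp : ∀ i, 0 ≤ p i := fun i => (Complex.nonneg_iff.mp (hq i)).1
  have hχre : ∀ i k, χ i k = ((a i k : ℝ) : ℂ) := by
    intro i k
    apply Complex.ext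
    · simp [hadef]
    · simp [← (Complex.nonneg_iff.mp (hχpos i k)).2]
  have hqre : ∀ i, q i = ((p i : ℝ) : ℂ) := by
    intro i
    apply Complex.ext
    · simp [hpdef]
    · simp [← (Complex.nonneg_iff.mp (hq i)).2]
  have htr1' : (ρ * (List.ofFn N).prod).trace = ((∑ i, (∏ k, a i k) * p i : ℝ) : ℂ) := by
    rw [htr1]
    push_cast
    refine Finset.sum_congr rfl fun i _ => ?_
    rw [hqre i]
    congr 1
    exact Finset.prod_congr rfl fun k _ => hχre i k
  have htr2' : ∀ k, (ρ * N k ^ m).trace = ((∑ i, a i k ^ m * p i : ℝ) : ℂ) := by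
    intro k
    rw [htr2 k]
    push_cast
    refine Finset.sum_congr rfl fun i _ => ?_
    rw [hqre i, hχre i k]
  refine ⟨?_, ?_, ?_⟩
  · rw [htr1', Complex.ofReal_re]
    exact Finset.sum_nonneg fun i _ =>
      mul_nonneg (Finset.prod_nonneg fun k _ => ha i k) (hp i)
  · rw [htr1', Complex.ofReal_im]
  · have hrw : ∀ k : Fin m, (ρ * N k ^ m).trace.re = ∑ i, a i k ^ m * p i := by
      intro k; rw [htr2' k, Complex.ofReal_re]
    rw [htr1', Complex.ofReal_re]
    calc ∑ i, (∏ k, a i k) * p i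
        ≤ ∏ k : Fin m, (∑ i, a i k ^ m * p i) ^ ((1 : ℝ)/(m : ℝ)) :=
          holder_fin' hm p hp a ha
      _ = _ := by
          exact Finset.prod_congr rfl fun k _ => by rw [hrw k]
end

section
/- Let n ≥ 1 and m ≥ 1, let H, O, ρ, U₁, …, U_m be n×n complex matrices and τ ∈ ℝ. For s ∈ ℝ and a matrix A set α_s(A) := exp(isH)·A·exp(−isH). Define O⁽⁰⁾ := O and O⁽ʲ⁾ := U_jᴴ·O⁽ʲ⁻¹⁾·U_j for 1 ≤ j ≤ m. Then tr[ ρ · ( α_{mτ}(O) − (U₁U₂⋯U_m)ᴴ · O · (U₁U₂⋯U_m) ) ] = Σ_{j=1}^m tr[ α_{(j−m)τ}(ρ) · ( α_τ(O⁽ʲ⁻¹⁾) − O⁽ʲ⁾ ) ]. -/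
open scoped Matrix

set_option maxHeartbeats 1000000 in
private lemma exp_smul_add' {n : ℕ} (H : Matrix (Fin n) (Fin n) ℂ) (a b : ℂ) :
    NormedSpace.exp ((a + b) • H)
      = NormedSpace.exp (a • H) * NormedSpace.exp (b • H) := by
  rw [add_smul]
  exact Matrix.exp_add_of_commute _ _
    (((Commute.refl H).smul_left a).smul_right b)

/-- Heisenberg evolution `α_s(A) = exp(isH)·A·exp(−isH)`. -/
noncomputable def heis {n : ℕ} (H : Matrix (Fin n) (Fin n) ℂ) (s : ℝ)
    (A : Matrix (Fin n) (Fin n) ℂ) : Matrix (Fin n) (Fin n) ℂ :=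
  NormedSpace.exp ((Complex.I * (s : ℂ)) • H) * A
    * NormedSpace.exp ((-(Complex.I * (s : ℂ))) • H)

private lemma heis_heis {n : ℕ} (H : Matrix (Fin n) (Fin n) ℂ) (s t : ℝ)
    (A : Matrix (Fin n) (Fin n) ℂ) :
    heis H s (heis H t A) = heis H (s + t) A := by
  simp only [heis]
  have h1 : (Complex.I * ((s : ℂ) + t)) = Complex.I * s + Complex.I * t := by ring
  have h2 : (-(Complex.I * ((s : ℂ) + t))) = -(Complex.I * t) + -(Complex.I * s) := by ring
  rw [Complex.ofReal_add, h2, h1, exp_smul_add', exp_smul_add']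
  noncomm_ring

private lemma heis_zero {n : ℕ} (H : Matrix (Fin n) (Fin n) ℂ)
    (A : Matrix (Fin n) (Fin n) ℂ) : heis H 0 A = A := by
  simp [heis]

private lemma heis_trace {n : ℕ} (H : Matrix (Fin n) (Fin n) ℂ) (s : ℝ)
    (ρ X : Matrix (Fin n) (Fin n) ℂ) :
    (heis H s ρ * X).trace = (ρ * heis H (-s) X).trace := by
  simp only [heis, Complex.ofReal_neg, mul_neg, neg_neg]
  rw [mul_assoc, mul_assoc, Matrix.trace_mul_comm]
  congr 1
  noncomm_ring

private lemma heis_sub {n : ℕ} (H : Matrix (Fin n) (Fin n) ℂ) (s : ℝ)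
    (A B : Matrix (Fin n) (Fin n) ℂ) :
    heis H s (A - B) = heis H s A - heis H s B := by
  simp only [heis, Matrix.mul_sub, Matrix.sub_mul]

/-- Telescoping identity for the concatenation of local unitaries:
`tr[ρ·(α_{mτ}(O) − (U₁⋯U_m)ᴴ·O·(U₁⋯U_m))]
  = Σ_{j=1}^m tr[α_{(j−m)τ}(ρ)·(α_τ(O⁽ʲ⁻¹⁾) − O⁽ʲ⁾)]`,
where `O⁽⁰⁾ = O` and `O⁽ʲ⁾ = U_jᴴ·O⁽ʲ⁻¹⁾·U_j`. -/
theorem stmt_9 {n m : ℕ} (hn : 1 ≤ n) (hm : 1 ≤ m)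
    (H O ρ : Matrix (Fin n) (Fin n) ℂ)
    (U : ℕ → Matrix (Fin n) (Fin n) ℂ) (τ : ℝ)
    (Oseq : ℕ → Matrix (Fin n) (Fin n) ℂ)
    (hO0 : Oseq 0 = O)
    (hOrec : ∀ j : ℕ, Oseq (j + 1) = (U (j + 1))ᴴ * Oseq j * U (j + 1)) :
    (ρ * (heis H ((m : ℝ) * τ) O
        - ((List.range m).map (fun j => U (j + 1))).prodᴴ * O
            * ((List.range m).map (fun j => U (j + 1))).prod)).trace
      = ∑ j ∈ Finset.range m,
          (heis H ((((j : ℝ) + 1) - (m : ℝ)) * τ) ρ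
            * (heis H τ (Oseq j) - Oseq (j + 1))).trace := by
  have hOm : ∀ k : ℕ, Oseq k = ((List.range k).map (fun j => U (j + 1))).prodᴴ * O
      * ((List.range k).map (fun j => U (j + 1))).prod := by
    intro k
    induction k with
    | zero => simp [hO0]
    | succ k ih =>
      rw [hOrec, ih, List.range_succ, List.map_append, List.prod_append]
      simp [Matrix.conjTranspose_mul, mul_assoc]
  set f : ℕ → ℂ := fun j => (ρ * heis H (((m : ℝ) - j) * τ) (Oseq j)).trace with hf
  have hterm : ∀ j ∈ Finset.range m,
      (heis H ((((j : ℝ) + 1) - (m : ℝ)) * τ) ρ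
        * (heis H τ (Oseq j) - Oseq (j + 1))).trace = f j - f (j + 1) := by
    intro j _
    have e1 : (-((((j : ℝ) + 1) - m) * τ) + τ) = ((m : ℝ) - j) * τ := by ring
    have e2 : (-((((j : ℝ) + 1) - m) * τ)) = ((m : ℝ) - ((j + 1 : ℕ) : ℝ)) * τ := by
      push_cast; ring
    rw [heis_trace, heis_sub, heis_heis, e1, e2, Matrix.mul_sub, Matrix.trace_sub]
  rw [Finset.sum_congr rfl hterm, Finset.sum_range_sub' f]
  have hf0 : f 0 = (ρ * heis H ((m : ℝ) * τ) O).trace := by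
    simp [hf, hO0]
  have hfm : f m = (ρ * Oseq m).trace := by
    simp [hf, heis_zero]
  rw [hf0, hfm, hOm m, Matrix.mul_sub, Matrix.trace_sub, ← hOm m, hOm m]
end

section
/- Let τ ≥ 0. Assume H is Hermitian, Π is an orthogonal projection (Π² = Π = Πᴴ) with complement Π^⊥ := 1 − Π, H̃ := ΠHΠ, H₀ is a matrix such that H − H₀ commutes with Π, ρ is PSD, and O is a matrix with operator norm ‖O‖ ≤ 1 and OΠ = ΠO. Then | tr[ ( exp(iτH) − exp(iτH̃) )·O·( exp(−iτH) − exp(−iτH̃) )·ρ ] | ≤ 2·‖Π^⊥·√ρ‖_F² + 2·‖Π^⊥·exp(−iτH)·√ρ‖_F² + ( ∫₀^τ ‖Π·H₀·Π^⊥·exp(−i(τ−τ₁)H)·√ρ‖_F dτ₁ )². -/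
open scoped Matrix ComplexOrder

/-- Frobenius norm `‖A‖_F = √(tr (Aᴴ A))`. -/
noncomputable def frobNorm {n : ℕ} (A : Matrix (Fin n) (Fin n) ℂ) : ℝ :=
  Real.sqrt ((Aᴴ * A).trace.re)

/-- The PSD square root of a PSD matrix, as `Matrix.PosSemidef.sqrt` was defined in the
older Mathlib (removed since). -/
noncomputable def Matrix.PosSemidef.sqrt {n : ℕ} {A : Matrix (Fin n) (Fin n) ℂ}
    (hA : A.PosSemidef) : Matrix (Fin n) (Fin n) ℂ :=
  hA.1.eigenvectorUnitary.1 * Matrix.diagonal ((↑) ∘ (Real.sqrt ·) ∘ hA.1.eigenvalues) *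
  (star hA.1.eigenvectorUnitary : Matrix (Fin n) (Fin n) ℂ)

theorem psd_sqrt_conjTranspose {n : ℕ} {A : Matrix (Fin n) (Fin n) ℂ} (hA : A.PosSemidef) :
    (hA.sqrt)ᴴ = hA.sqrt := by
  unfold Matrix.PosSemidef.sqrt
  simp [Matrix.mul_assoc, ← Matrix.star_eq_conjTranspose]
  congr 2
  rw [Matrix.star_eq_conjTranspose, Matrix.diagonal_conjTranspose]
  congr 1
  funext i
  simp

theorem psd_sqrt_mul_self {n : ℕ} {A : Matrix (Fin n) (Fin n) ℂ} (hA : A.PosSemidef) :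
    hA.sqrt * hA.sqrt = A := by
  unfold Matrix.PosSemidef.sqrt
  conv_rhs => rw [hA.1.spectral_theorem, Unitary.conjStarAlgAut_apply]
  have hU : (star hA.1.eigenvectorUnitary : Matrix (Fin n) (Fin n) ℂ) * hA.1.eigenvectorUnitary.1 = 1 := by
    simp
  calc _ = hA.1.eigenvectorUnitary.1 * (Matrix.diagonal ((↑) ∘ (Real.sqrt ·) ∘ hA.1.eigenvalues) *
      ((star hA.1.eigenvectorUnitary : Matrix (Fin n) (Fin n) ℂ) * hA.1.eigenvectorUnitary.1) *
      Matrix.diagonal ((↑) ∘ (Real.sqrt ·) ∘ hA.1.eigenvalues)) *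
      (star hA.1.eigenvectorUnitary : Matrix (Fin n) (Fin n) ℂ) := by
        simp only [Matrix.mul_assoc]
    _ = _ := by
      rw [hU, Matrix.mul_one, Matrix.diagonal_mul_diagonal]
      congr 3
      funext i
      simp only [Function.comp_apply]
      rw [← Complex.ofReal_mul, Real.mul_self_sqrt (hA.eigenvalues_nonneg i)]
      rfl


open NormedSpace

attribute [local instance] Matrix.frobeniusSeminormedAddCommGroup
  Matrix.frobeniusNormedAddCommGroup Matrix.frobeniusNormedSpace
  Matrix.frobeniusNormedRing Matrix.frobeniusNormedAlgebra

variable {n : ℕ}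

local notation "Mat" => Matrix (Fin n) (Fin n) ℂ

local instance : CompleteSpace Mat := FiniteDimensional.complete ℂ _

theorem trace_re_eq (A : Mat) : (Aᴴ * A).trace.re = ∑ j, ∑ i, ‖A i j‖ ^ 2 := by
  rw [Matrix.trace]
  rw [Complex.re_sum]
  refine Finset.sum_congr rfl fun j _ => ?_
  rw [Matrix.diag_apply, Matrix.mul_apply, Complex.re_sum]
  refine Finset.sum_congr rfl fun i _ => ?_
  rw [Matrix.conjTranspose_apply]
  rw [show (star (A i j) * A i j) = (starRingEnd ℂ) (A i j) * A i j from rfl,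
    mul_comm, Complex.mul_conj]
  simp [Complex.normSq_eq_norm_sq, ← Complex.ofReal_pow]

theorem frobNorm_eq_norm (A : Mat) : frobNorm A = ‖A‖ := by
  rw [frobNorm, Matrix.frobenius_norm_def, Real.sqrt_eq_rpow, trace_re_eq, Finset.sum_comm]
  norm_num

theorem frobNorm_nonneg (A : Mat) : 0 ≤ frobNorm A := Real.sqrt_nonneg _

theorem trace_re_nonneg (A : Mat) : 0 ≤ (Aᴴ * A).trace.re := by
  rw [trace_re_eq]; positivity

theorem frobNorm_sq (A : Mat) : frobNorm A ^ 2 = (Aᴴ * A).trace.re :=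
  Real.sq_sqrt (trace_re_nonneg A)

theorem frobNorm_unitary_mul {W : Mat} (hW : Wᴴ * W = 1) (A : Mat) :
    frobNorm (W * A) = frobNorm A := by
  unfold frobNorm
  have h : (W * A)ᴴ * (W * A) = Aᴴ * A := by
    rw [Matrix.conjTranspose_mul]
    calc Aᴴ * Wᴴ * (W * A) = Aᴴ * (Wᴴ * W) * A := by
          simp only [Matrix.mul_assoc]
      _ = Aᴴ * A := by rw [hW, Matrix.mul_one]
  rw [h]

theorem exp_mul_of_mul_eq_zero {A B : Mat} (h : A * B = 0) : exp A * B = B := by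
  rw [exp_eq_tsum (𝕂 := ℂ)]
  beta_reduce
  refine (Summable.tsum_mul_right B (expSeries_summable' (𝕂 := ℂ) A)).symm.trans ?_
  rw [tsum_eq_single 0]
  · simp
  · rintro (_ | m) hn
    · exact absurd rfl hn
    · rw [smul_mul_assoc, pow_succ, mul_assoc, h, mul_zero, smul_zero]

theorem mul_exp_of_mul_eq_zero {A B : Mat} (h : B * A = 0) : B * exp A = B := by
  rw [exp_eq_tsum (𝕂 := ℂ)]
  beta_reduce
  refine (Summable.tsum_mul_left B (expSeries_summable' (𝕂 := ℂ) A)).symm.trans ?_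
  rw [tsum_eq_single 0]
  · simp
  · rintro (_ | m) hn
    · exact absurd rfl hn
    · rw [mul_smul_comm, pow_succ', ← mul_assoc, h, zero_mul, smul_zero]

theorem exp_skew_unitary {M : Mat} (hM : Mᴴ = M) {c : ℂ} (hc : star c = -c) :
    (exp (c • M))ᴴ * exp (c • M) = 1 := by
  have hcm : Commute ((-c) • M) (c • M) := ((Commute.refl M).smul_left _).smul_right _
  rw [← Matrix.exp_conjTranspose, Matrix.conjTranspose_smul, hM, hc]
  have h := NormedSpace.exp_add_of_commute hcm
  rw [neg_smul, neg_add_cancel, NormedSpace.exp_zero, ← neg_smul] at h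
  exact h.symm

theorem abs_trace_le {O : Matrix (Fin n) (Fin n) ℂ}
    (hO : ∀ x : EuclideanSpace ℂ (Fin n), ‖Matrix.toEuclideanLin O x‖ ≤ ‖x‖)
    (X : Mat) :
    ‖(Xᴴ * O * X).trace‖ ≤ frobNorm X ^ 2 := by
  classical
  set v : Fin n → EuclideanSpace ℂ (Fin n) :=
    fun j => WithLp.toLp 2 (fun i => X i j) with hv
  have hdiag : ∀ j, (Xᴴ * O * X) j j
      = inner (𝕜 := ℂ) (v j) (Matrix.toEuclideanLin O (v j)) := by
    intro j
    rw [Matrix.toEuclideanLin_apply, PiLp.inner_apply]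
    simp only [PiLp.toLp_apply, WithLp.ofLp_toLp, RCLike.inner_apply,
      hv, Matrix.mulVec, dotProduct]
    simp only [Matrix.mul_apply, Finset.sum_mul, Finset.mul_sum]
    rw [Finset.sum_comm]
    refine Finset.sum_congr rfl fun i _ => ?_
    refine Finset.sum_congr rfl fun k _ => ?_
    rw [Matrix.conjTranspose_apply]
    simp only [RCLike.star_def]
    ring
  have hnv : ∀ j, ‖v j‖ ^ 2 = ∑ i, ‖X i j‖ ^ 2 := by
    intro j
    rw [EuclideanSpace.norm_eq, Real.sq_sqrt (by positivity)]
  calc ‖(Xᴴ * O * X).trace‖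
      ≤ ∑ j, ‖(Xᴴ * O * X) j j‖ := by
        rw [Matrix.trace]
        exact norm_sum_le _ _
    _ ≤ ∑ j, ‖v j‖ ^ 2 := by
        refine Finset.sum_le_sum fun j _ => ?_
        rw [hdiag j]
        calc ‖inner (𝕜 := ℂ) (v j) (Matrix.toEuclideanLin O (v j))‖
            ≤ ‖v j‖ * ‖Matrix.toEuclideanLin O (v j)‖ := norm_inner_le_norm _ _
          _ ≤ ‖v j‖ * ‖v j‖ := by
              exact mul_le_mul_of_nonneg_left (hO _) (norm_nonneg _)
          _ = ‖v j‖ ^ 2 := (sq (‖v j‖)).symm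
    _ = frobNorm X ^ 2 := by
        rw [frobNorm_sq, trace_re_eq]
        exact Finset.sum_congr rfl fun j _ => hnv j

theorem hasDerivAt_aux (A₁ A₂ K R : Mat) (τ : ℝ) (s : ℝ) :
    HasDerivAt
      (fun u : ℝ => exp ((u:ℂ) • A₁) * (K * (exp (((τ:ℂ) - (u:ℂ)) • A₂) * R)))
      (exp ((s:ℂ) • A₁) *
        ((A₁ * K - K * A₂) * (exp (((τ:ℂ) - (s:ℂ)) • A₂) * R))) s := by
  have hre : HasDerivAt (fun u : ℝ => (u:ℂ)) 1 s := by
    exact Complex.ofRealCLM.hasDerivAt (x := s)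
  have h1 : HasDerivAt (fun u : ℝ => exp ((u:ℂ) • A₁)) (exp ((s:ℂ) • A₁) * A₁) s := by
    have h := (hasDerivAt_exp_smul_const (𝕂 := ℂ) A₁ ((s:ℝ):ℂ)).scomp s hre
    rw [one_smul] at h
    exact h
  have hin : HasDerivAt (fun u : ℝ => (τ:ℂ) - (u:ℂ)) (-1) s := by
    have h := (hasDerivAt_const s (τ:ℂ)).sub hre
    rw [zero_sub] at h
    exact h
  have h2 : HasDerivAt (fun u : ℝ => exp (((τ:ℂ) - (u:ℂ)) • A₂))
      ((-1 : ℂ) • (exp (((τ:ℂ) - (s:ℂ)) • A₂) * A₂)) s := by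
    have h := (hasDerivAt_exp_smul_const (𝕂 := ℂ) A₂ ((τ:ℂ) - (s:ℂ))).scomp s hin
    exact h
  have h3 := h1.mul ((h2.mul_const R).const_mul K)
  refine h3.congr_deriv ?_
  symm
  have hc : exp (((τ:ℂ) - (s:ℂ)) • A₂) * A₂ = A₂ * exp (((τ:ℂ) - (s:ℂ)) • A₂) :=
    (((Commute.refl A₂).smul_left _).exp_left).eq
  simp only [neg_one_smul, neg_mul, mul_neg, sub_mul, mul_sub, add_mul, mul_add,
    ← Matrix.mul_assoc]
  rw [show exp (((s:ℝ):ℂ) • A₁) * K * exp (((τ:ℂ) - ((s:ℝ):ℂ)) • A₂) * A₂ * R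
      = exp (((s:ℝ):ℂ) • A₁) * K * A₂ * exp (((τ:ℂ) - ((s:ℝ):ℂ)) • A₂) * R from by
    rw [Matrix.mul_assoc (exp (((s:ℝ):ℂ) • A₁) * K), hc, ← Matrix.mul_assoc]]
  rw [sub_eq_add_neg]


set_option maxHeartbeats 1000000 in
/-- Second-order error estimate for the effective-Hamiltonian comparison:
`|tr[(e^{iτH} − e^{iτH̃})·O·(e^{−iτH} − e^{−iτH̃})·ρ]|
  ≤ 2‖Π^⊥√ρ‖_F² + 2‖Π^⊥e^{−iτH}√ρ‖_F²
    + (∫₀^τ ‖Π·H₀·Π^⊥·e^{−i(τ−τ₁)H}·√ρ‖_F dτ₁)²`,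
where `H̃ = ΠHΠ` and `Π^⊥ = 1 − Π`, for `O` of operator norm at most 1
commuting with `Π`. -/
theorem stmt_11 {n : ℕ} (τ : ℝ) (hτ : 0 ≤ τ)
    (H P H₀ ρ O : Matrix (Fin n) (Fin n) ℂ)
    (hH : H.IsHermitian)
    (hP2 : P * P = P) (hPH : Pᴴ = P)
    (hcomm : (H - H₀) * P = P * (H - H₀))
    (hρ : ρ.PosSemidef)
    (hOnorm : ∀ x : EuclideanSpace ℂ (Fin n),
      ‖Matrix.toEuclideanLin O x‖ ≤ ‖x‖)
    (hOP : O * P = P * O) :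
    ‖(((NormedSpace.exp ((Complex.I * (τ : ℂ)) • H)
              - NormedSpace.exp ((Complex.I * (τ : ℂ)) • (P * H * P))) * O *
            (NormedSpace.exp ((-(Complex.I * (τ : ℂ))) • H)
              - NormedSpace.exp ((-(Complex.I * (τ : ℂ))) • (P * H * P))) *
            ρ).trace)‖
      ≤ 2 * frobNorm (((1 : Matrix (Fin n) (Fin n) ℂ) - P) * hρ.sqrt) ^ 2
        + 2 * frobNorm (((1 : Matrix (Fin n) (Fin n) ℂ) - P)
            * NormedSpace.exp ((-(Complex.I * (τ : ℂ))) • H) * hρ.sqrt) ^ 2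
        + (∫ τ₁ in (0:ℝ)..τ,
            frobNorm (P * H₀ * ((1 : Matrix (Fin n) (Fin n) ℂ) - P)
              * NormedSpace.exp
                  ((-(Complex.I * ((τ : ℂ) - (τ₁ : ℂ)))) • H)
              * hρ.sqrt)) ^ 2 := by
  classical
  set Q : Matrix (Fin n) (Fin n) ℂ := 1 - P with hQ
  set R : Matrix (Fin n) (Fin n) ℂ := hρ.sqrt with hRdef
  have hRH : Rᴴ = R := psd_sqrt_conjTranspose hρ
  have hRR : R * R = ρ := psd_sqrt_mul_self hρ
  set Ht : Matrix (Fin n) (Fin n) ℂ := P * H * P with hHt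
  have hHtH : Htᴴ = Ht := by
    rw [hHt, Matrix.conjTranspose_mul, Matrix.conjTranspose_mul, hPH, hH.eq,
      Matrix.mul_assoc]
  set c : ℂ := -(Complex.I * (τ:ℂ)) with hc
  have hcs : star c = -c := by
    simp [hc, Complex.star_def, map_neg, map_mul, Complex.conj_I, Complex.conj_ofReal]
  set U : Matrix (Fin n) (Fin n) ℂ := NormedSpace.exp (c • H) with hU
  set Ut : Matrix (Fin n) (Fin n) ℂ := NormedSpace.exp (c • Ht) with hUt
  -- adjoints
  have hUadj : NormedSpace.exp ((Complex.I * (τ:ℂ)) • H) = Uᴴ := by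
    rw [hU, ← Matrix.exp_conjTranspose]
    congr 1
    rw [Matrix.conjTranspose_smul, hH.eq, hcs, hc, neg_neg]
  have hUtadj : NormedSpace.exp ((Complex.I * (τ:ℂ)) • Ht) = Utᴴ := by
    rw [hUt, ← Matrix.exp_conjTranspose]
    congr 1
    rw [Matrix.conjTranspose_smul, hHtH, hcs, hc, neg_neg]
  rw [hUadj, hUtadj, ← Matrix.conjTranspose_sub]
  set D : Matrix (Fin n) (Fin n) ℂ := U - Ut with hD
  set S : Matrix (Fin n) (Fin n) ℂ := D * R with hS
  -- trace rearrangement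
  have htr : (Dᴴ * O * D * ρ).trace = (Sᴴ * O * S).trace := by
    rw [← hRR, ← Matrix.mul_assoc, Matrix.trace_mul_comm]
    congr 1
    rw [hS, Matrix.conjTranspose_mul, hRH]
    simp only [Matrix.mul_assoc]
  rw [htr]
  -- projection algebra
  have hPQ : P * Q = 0 := by rw [hQ, Matrix.mul_sub, Matrix.mul_one, hP2, sub_self]
  have hQP : Q * P = 0 := by rw [hQ, Matrix.sub_mul, Matrix.one_mul, hP2, sub_self]
  have hQH : Qᴴ = Q := by rw [hQ, Matrix.conjTranspose_sub, Matrix.conjTranspose_one, hPH]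
  have hQOP : Q * (O * P) = 0 := by
    rw [hOP, hQ, Matrix.sub_mul, Matrix.one_mul, ← Matrix.mul_assoc, hP2, sub_self]
  have hOQ : O * Q = Q * O := by
    rw [hQ, Matrix.mul_sub, Matrix.sub_mul, Matrix.mul_one, Matrix.one_mul, hOP]
  have hPOQ : P * (O * Q) = 0 := by
    rw [hOQ, ← Matrix.mul_assoc, hPQ, Matrix.zero_mul]
  have cross1 : (Q * S)ᴴ * O * (P * S) = 0 := by
    rw [Matrix.conjTranspose_mul, hQH]
    calc Sᴴ * Q * O * (P * S) = Sᴴ * ((Q * (O * P)) * S) := by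
          simp only [Matrix.mul_assoc]
      _ = 0 := by rw [hQOP, Matrix.zero_mul, Matrix.mul_zero]
  have cross2 : (P * S)ᴴ * O * (Q * S) = 0 := by
    rw [Matrix.conjTranspose_mul, hPH]
    calc Sᴴ * P * O * (Q * S) = Sᴴ * ((P * (O * Q)) * S) := by
          simp only [Matrix.mul_assoc]
      _ = 0 := by rw [hPOQ, Matrix.zero_mul, Matrix.mul_zero]
  have hsplit : Sᴴ * O * S = (Q * S)ᴴ * O * (Q * S) + (P * S)ᴴ * O * (P * S) := by
    have hQS : Q * S + P * S = S := by
      rw [← Matrix.add_mul, hQ, sub_add_cancel, Matrix.one_mul]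
    conv_lhs => rw [← hQS]
    simp only [Matrix.conjTranspose_add, Matrix.add_mul, Matrix.mul_add]
    rw [cross1, cross2]
    abel
  have habs : ‖(Sᴴ * O * S).trace‖
      ≤ frobNorm (Q * S) ^ 2 + frobNorm (P * S) ^ 2 := by
    rw [hsplit, Matrix.trace_add]
    refine le_trans (norm_add_le _ _) ?_
    exact add_le_add (abs_trace_le hOnorm _) (abs_trace_le hOnorm _)
  -- bound on the Q-part
  have hQHt0 : Q * Ht = 0 := by
    rw [hHt]
    simp only [← Matrix.mul_assoc]
    rw [hQP, Matrix.zero_mul, Matrix.zero_mul]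
  have hQUt : Q * Ut = Q :=
    mul_exp_of_mul_eq_zero (by rw [mul_smul_comm, hQHt0, smul_zero])
  have hQS2 : Q * S = Q * U * R - Q * R := by
    rw [hS, hD]
    simp only [Matrix.mul_sub, Matrix.sub_mul, ← Matrix.mul_assoc, hQUt]
  have hX : frobNorm (Q * S) ^ 2
      ≤ 2 * frobNorm (Q * R) ^ 2 + 2 * frobNorm (Q * U * R) ^ 2 := by
    have h1 : frobNorm (Q * S) ≤ frobNorm (Q * U * R) + frobNorm (Q * R) := by
      rw [hQS2, frobNorm_eq_norm, frobNorm_eq_norm, frobNorm_eq_norm]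
      exact norm_sub_le _ _
    have h2 : frobNorm (Q * S) ^ 2 ≤ (frobNorm (Q * U * R) + frobNorm (Q * R)) ^ 2 :=
      pow_le_pow_left₀ (frobNorm_nonneg _) h1 2
    nlinarith [sq_nonneg (frobNorm (Q * U * R) - frobNorm (Q * R))]
  -- Duhamel bound on the P-part
  have hHtP1 : Ht * P = Ht := by rw [hHt, Matrix.mul_assoc, hP2]
  have hHtP2 : P * Ht = Ht := by
    rw [hHt]
    simp only [← Matrix.mul_assoc]
    rw [hP2]
  have hPUt : P * Ut = Ut * P := by
    have hcm : Commute (c • Ht) P := Commute.smul_left (hHtP1.trans hHtP2.symm) c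
    exact (hcm.exp_left).eq.symm
  set Bp : Matrix (Fin n) (Fin n) ℂ := (-Complex.I) • Ht with hBp
  set BH : Matrix (Fin n) (Fin n) ℂ := (-Complex.I) • H with hBH
  set g : ℝ → Matrix (Fin n) (Fin n) ℂ := fun s =>
    NormedSpace.exp ((s:ℂ) • Bp) *
      (P * (NormedSpace.exp (((τ:ℂ) - (s:ℂ)) • BH) * R)) with hg
  set g' : ℝ → Matrix (Fin n) (Fin n) ℂ := fun s =>
    NormedSpace.exp ((s:ℂ) • Bp) *
      ((Bp * P - P * BH) * (NormedSpace.exp (((τ:ℂ) - (s:ℂ)) • BH) * R)) with hg'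
  have hderiv : ∀ s ∈ Set.uIcc (0:ℝ) τ, HasDerivAt g (g' s) s := fun s _ =>
    hasDerivAt_aux Bp BH P R τ s
  have hcont : Continuous g' := by
    refine Continuous.mul ?_ (continuous_const.mul (Continuous.mul ?_ continuous_const))
    · exact NormedSpace.exp_continuous.comp (Complex.continuous_ofReal.smul continuous_const)
    · exact NormedSpace.exp_continuous.comp
        ((continuous_const.sub Complex.continuous_ofReal).smul continuous_const)
  have hint := hcont.intervalIntegrable (μ := MeasureTheory.volume) 0 τ
  have hftc : (∫ s in (0:ℝ)..τ, g' s) = g τ - g 0 :=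
    intervalIntegral.integral_eq_sub_of_hasDerivAt hderiv hint
  have hg0 : g 0 = P * (U * R) := by
    rw [hg]
    simp only [Complex.ofReal_zero, zero_smul, NormedSpace.exp_zero, Matrix.one_mul,
      sub_zero]
    rw [show ((τ:ℂ)) • BH = c • H from by rw [hBH, smul_smul, hc]; congr 1; ring, ← hU]
  have hgτ : g τ = Ut * (P * R) := by
    rw [hg]
    simp only [sub_self, zero_smul, NormedSpace.exp_zero, Matrix.one_mul]
    rw [show ((τ:ℂ)) • Bp = c • Ht from by rw [hBp, smul_smul, hc]; congr 1; ring, ← hUt]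
  have hPS : P * S = g 0 - g τ := by
    rw [hg0, hgτ, hS, hD]
    simp only [Matrix.mul_sub, Matrix.sub_mul, ← Matrix.mul_assoc, hPUt]
  -- middle factor
  have hPHQ : P * H * Q = P * H₀ * Q := by
    have h0 : P * (H - H₀) * Q = 0 := by
      rw [← hcomm, Matrix.mul_assoc, hPQ, Matrix.mul_zero]
    have h1 : P * H * Q - P * H₀ * Q = 0 := by
      rw [← h0]; simp only [Matrix.mul_sub, Matrix.sub_mul]
    exact sub_eq_zero.mp h1
  have hmid : Bp * P - P * BH = Complex.I • (P * H₀ * Q) := by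
    rw [hBp, hBH, smul_mul_assoc, mul_smul_comm, ← smul_sub, hHtP1, hHt]
    have h2 : P * H * P - P * H = -(P * H₀ * Q) := by
      rw [← hPHQ, hQ, Matrix.mul_sub, Matrix.mul_one]
      abel
    rw [h2, smul_neg, neg_smul, neg_neg]
  have hgnorm : ∀ s : ℝ, ‖g' s‖ = frobNorm (P * H₀ * Q
      * NormedSpace.exp ((-(Complex.I * ((τ:ℂ) - (s:ℂ)))) • H) * R) := by
    intro s
    rw [hg', hmid]
    have hsc1 : (s:ℂ) • Bp = ((s:ℂ) * (-Complex.I)) • Ht := by rw [hBp, smul_smul]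
    have hu : (NormedSpace.exp ((s:ℂ) • Bp))ᴴ * NormedSpace.exp ((s:ℂ) • Bp) = 1 := by
      rw [hsc1]
      refine exp_skew_unitary hHtH ?_
      simp only [Complex.star_def, map_mul, Complex.conj_ofReal, map_neg, Complex.conj_I]
      ring
    rw [← frobNorm_eq_norm, frobNorm_unitary_mul hu, smul_mul_assoc]
    rw [frobNorm_eq_norm, frobNorm_eq_norm, norm_smul, Complex.norm_I, one_mul]
    rw [show ((τ:ℂ) - (s:ℂ)) • BH = (-(Complex.I * ((τ:ℂ) - (s:ℂ)))) • H from by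
      rw [hBH, smul_smul]; congr 1; ring]
    simp only [← Matrix.mul_assoc]
  have hY : frobNorm (P * S) ≤ ∫ τ₁ in (0:ℝ)..τ,
      frobNorm (P * H₀ * Q
        * NormedSpace.exp ((-(Complex.I * ((τ:ℂ) - (τ₁:ℂ)))) • H) * R) := by
    calc frobNorm (P * S) = ‖g 0 - g τ‖ := by rw [hPS, frobNorm_eq_norm]
      _ = ‖g τ - g 0‖ := norm_sub_rev _ _
      _ = ‖∫ s in (0:ℝ)..τ, g' s‖ := by rw [hftc]
      _ ≤ ∫ s in (0:ℝ)..τ, ‖g' s‖ := intervalIntegral.norm_integral_le_integral_norm hτ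
      _ = _ := intervalIntegral.integral_congr fun s _ => hgnorm s
  have hYsq : frobNorm (P * S) ^ 2 ≤ (∫ τ₁ in (0:ℝ)..τ,
      frobNorm (P * H₀ * Q
        * NormedSpace.exp ((-(Complex.I * ((τ:ℂ) - (τ₁:ℂ)))) • H) * R)) ^ 2 :=
    pow_le_pow_left₀ (frobNorm_nonneg _) hY 2
  calc ‖(Sᴴ * O * S).trace‖
      ≤ frobNorm (Q * S) ^ 2 + frobNorm (P * S) ^ 2 := habs
    _ ≤ (2 * frobNorm (Q * R) ^ 2 + 2 * frobNorm (Q * U * R) ^ 2)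
        + (∫ τ₁ in (0:ℝ)..τ,
            frobNorm (P * H₀ * Q
              * NormedSpace.exp ((-(Complex.I * ((τ:ℂ) - (τ₁:ℂ)))) • H) * R)) ^ 2 :=
        add_le_add hX hYsq
end

section
/- Let U > 0 be real and J ∈ ℝ. Then the set { 2U·b² − 2·|J|·a·b : a, b ∈ ℝ, a ≥ 0, b ≥ 0, a² + 2b² = 1 } has a least element, equal to (U/2)·( 1 − √( 1 + 2J²/U² ) ). -/
set_option maxHeartbeats 1600000 in
/-- Two-mode variational minimization: for `U > 0` and `J ∈ ℝ`, the set
`{2U·b² − 2|J|·a·b : a,b ≥ 0, a² + 2b² = 1}` has least element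
`(U/2)·(1 − √(1 + 2J²/U²))`. -/
theorem stmt_13 (U J : ℝ) (hU : 0 < U) :
    IsLeast
      {x : ℝ | ∃ a b : ℝ, 0 ≤ a ∧ 0 ≤ b ∧ a ^ 2 + 2 * b ^ 2 = 1 ∧
        x = 2 * U * b ^ 2 - 2 * |J| * a * b}
      ((U / 2) * (1 - Real.sqrt (1 + 2 * J ^ 2 / U ^ 2))) := by
  obtain ⟨R, hRdef⟩ : ∃ R : ℝ, R = Real.sqrt (U ^ 2 / 4 + J ^ 2 / 2) := ⟨_, rfl⟩
  have hRsq : R ^ 2 = U ^ 2 / 4 + J ^ 2 / 2 := by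
    rw [hRdef]; exact Real.sq_sqrt (by positivity)
  have hRpos : 0 < R := by rw [hRdef]; positivity
  have hRge : U / 2 ≤ R := by
    nlinarith [hRsq, hRpos, sq_nonneg J]
  have key : (U / 2) * (1 - Real.sqrt (1 + 2 * J ^ 2 / U ^ 2)) = U / 2 - R := by
    have h1 : (U / 2) * Real.sqrt (1 + 2 * J ^ 2 / U ^ 2) = R := by
      rw [hRdef, ← Real.sqrt_sq (by linarith : (0:ℝ) ≤ U / 2),
        ← Real.sqrt_mul (by positivity)]
      congr 1
      field_simp
      ring
    rw [mul_one_sub, h1]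
  rw [key]
  clear key hRdef
  constructor
  · -- membership: optimal point
    obtain ⟨X, hXdef⟩ : ∃ X : ℝ, X = (U / 2) / R := ⟨_, rfl⟩
    have hX0 : 0 < X := by rw [hXdef]; positivity
    have hX1 : X ≤ 1 := by
      rw [hXdef, div_le_one hRpos]; exact hRge
    have ha2 : (Real.sqrt ((1 + X) / 2)) ^ 2 = (1 + X) / 2 :=
      Real.sq_sqrt (by linarith)
    have hb2 : (Real.sqrt ((1 - X) / 4)) ^ 2 = (1 - X) / 4 :=
      Real.sq_sqrt (by linarith)
    refine ⟨Real.sqrt ((1 + X) / 2), Real.sqrt ((1 - X) / 4),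
      Real.sqrt_nonneg _, Real.sqrt_nonneg _, by linarith, ?_⟩
    have hab : Real.sqrt ((1 + X) / 2) * Real.sqrt ((1 - X) / 4) = |J| / (4 * R) := by
      rw [← Real.sqrt_mul (by linarith)]
      have h2 : (1 + X) / 2 * ((1 - X) / 4) = (|J| / (4 * R)) ^ 2 := by
        have hXsq : X ^ 2 = U ^ 2 / (4 * R ^ 2) := by
          rw [hXdef]; field_simp; ring
        have hJ : |J| ^ 2 = J ^ 2 := sq_abs J
        field_simp [hJ] at hXsq ⊢
        nlinarith [hXsq, hRsq, hRpos]
      rw [h2, Real.sqrt_sq (by positivity)]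
    rw [hb2, mul_assoc (2 * |J|), hab]
    have e1 : 2 * U * ((1 - X) / 4) * R = (U / 2) * R - U ^ 2 / 4 := by
      rw [hXdef]; field_simp; ring
    have e2 : 2 * |J| * (|J| / (4 * R)) * R = J ^ 2 / 2 := by
      field_simp
      nlinarith [abs_mul_abs_self J]
    apply mul_right_cancel₀ hRpos.ne'
    nlinarith [e1, e2, hRsq]
  · -- lower bound
    rintro x ⟨a, b, ha, hb, hc, rfl⟩
    obtain ⟨A, hAdef⟩ : ∃ A : ℝ, A = |J| := ⟨_, rfl⟩
    rw [← hAdef]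
    have hA2 : A ^ 2 = J ^ 2 := by rw [hAdef]; exact sq_abs J
    have h1 : (a ^ 2 - 2 * b ^ 2) ^ 2 + 2 * (2 * a * b) ^ 2 = 1 := by
      linear_combination (a ^ 2 + 2 * b ^ 2 + 1) * hc
    have heq : R ^ 2 - ((U / 2) * (a ^ 2 - 2 * b ^ 2) + A * (2 * a * b)) ^ 2
        = (1 / 2) * (A * (a ^ 2 - 2 * b ^ 2) - U * (2 * a * b)) ^ 2 := by
      linear_combination hRsq - (U ^ 2 / 4 + A ^ 2 / 2) * h1 - (1 / 2) * hA2
    obtain ⟨S, hSdef⟩ : ∃ S : ℝ,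
        S = (U / 2) * (a ^ 2 - 2 * b ^ 2) + A * (2 * a * b) := ⟨_, rfl⟩
    rw [← hSdef] at heq
    have hcs : S ^ 2 ≤ R ^ 2 := by
      linarith [heq, sq_nonneg (A * (a ^ 2 - 2 * b ^ 2) - U * (2 * a * b))]
    have h2 : (U / 2) * (a ^ 2 - 2 * b ^ 2) + A * (2 * a * b) ≤ R := by
      rw [← hSdef]
      nlinarith [hcs, hRpos]
    have hX' : (U / 2) * (a ^ 2 - 2 * b ^ 2) = U / 2 - 2 * U * b ^ 2 := by
      linear_combination (U / 2) * hc
    linarith [h2, hX']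
end
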